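/- Let H be a finite group of order m acting on a finite set S, f : S → S an H-equivariant map, and set M = (card (S/H))! and N = M · m!. Then the natural map Per_N(S,f)/H → Per_N(S/H, f̄), sending the H-orbit of P to π(P), is a bijection. -/
import Mathlib


/-- With `M = (card (S/H))!` and `N = M * m!` (`m = |H|`), the natural map
`Per_N(S,f)/H → Per_N(S/H, f̄)` is a bijection: it is well-defined, injective
(periodic points with the same image lie in the same orbit), and surjective
(every `N`-periodic point of `f̄` lifts to an `N`-periodic point of `f`). -/
theorem perN_quotient_map_bijective {H S : Type*} [Group H] [Fintype H] [Fintype S]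
    [MulAction H S] (m : ℕ) (hm : Fintype.card H = m)
    (f : S → S) (hf : ∀ (h : H) (x : S), f (h • x) = h • f x)
    (fbar : Quotient (MulAction.orbitRel H S) → Quotient (MulAction.orbitRel H S))
    (hfbar : fbar ∘ Quotient.mk (MulAction.orbitRel H S) =
      Quotient.mk (MulAction.orbitRel H S) ∘ f)
    (M N : ℕ)
    (hM : M = Nat.factorial (Nat.card (Quotient (MulAction.orbitRel H S))))
    (hN : N = M * Nat.factorial m) :
    (∀ P : S, f^[N] P = P →
        fbar^[N] (Quotient.mk (MulAction.orbitRel H S) P) =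
          Quotient.mk (MulAction.orbitRel H S) P) ∧
    (∀ P P' : S, f^[N] P = P → f^[N] P' = P' →
        Quotient.mk (MulAction.orbitRel H S) P = Quotient.mk (MulAction.orbitRel H S) P' →
        ∃ h : H, h • P = P') ∧
    (∀ Q : Quotient (MulAction.orbitRel H S), fbar^[N] Q = Q →
        ∃ P : S, f^[N] P = P ∧ Quotient.mk (MulAction.orbitRel H S) P = Q) := by
  classical
  set mk := Quotient.mk (MulAction.orbitRel H S) with hmk
  have hsemi : Function.Semiconj mk f fbar := fun x => (congrFun hfbar x).symm
  have hiter : ∀ (n : ℕ) (x : S), fbar^[n] (mk x) = mk (f^[n] x) := fun n x =>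
    ((hsemi.iterate_right n) x).symm
  -- equivariance of iterates
  have hfiter : ∀ (n : ℕ) (h : H) (x : S), f^[n] (h • x) = h • f^[n] x := by
    intro n
    induction n with
    | zero => simp
    | succ n ih => intro h x; rw [Function.iterate_succ_apply, hf, ih, ← Function.iterate_succ_apply]
  refine ⟨?_, ?_, ?_⟩
  · intro P hP
    rw [hiter, hP]
  · intro P P' _ _ hPP'
    obtain ⟨h, hh⟩ := Quotient.exact hPP'.symm
    exact ⟨h, hh⟩
  · intro Q hQ
    have hFin : Finite (Quotient (MulAction.orbitRel H S)) := Quotient.finite _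
    have hNpos : 0 < N := by
      rw [hN]; exact Nat.mul_pos (hM ▸ Nat.factorial_pos _) (Nat.factorial_pos _)
    have hQper : Function.IsPeriodicPt fbar N Q := hQ
    have hppos : 0 < Function.minimalPeriod fbar Q :=
      Function.IsPeriodicPt.minimalPeriod_pos hNpos hQper
    -- minimal period ≤ card
    have hple : Function.minimalPeriod fbar Q ≤ Nat.card (Quotient (MulAction.orbitRel H S)) := by
      have := Fintype.ofFinite (Quotient (MulAction.orbitRel H S))
      rw [Nat.card_eq_fintype_card]
      have hinj : Set.InjOn (fun n => fbar^[n] Q) (Finset.range (Function.minimalPeriod fbar Q)) := by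
        intro a ha b hb hab
        exact Function.iterate_injOn_Iio_minimalPeriod
          (by simpa using ha) (by simpa using hb) hab
      calc Function.minimalPeriod fbar Q
          = (Finset.range (Function.minimalPeriod fbar Q)).card := (Finset.card_range _).symm
        _ ≤ Fintype.card (Quotient (MulAction.orbitRel H S)) := by
            rw [← Finset.card_univ]
            exact Finset.card_le_card_of_injOn _ (fun a _ => Finset.mem_univ _) hinj
    have hpM : Function.minimalPeriod fbar Q ∣ M := by
      rw [hM]; exact Nat.dvd_factorial hppos hple
    have hQM : fbar^[M] Q = Q :=
      (Function.isPeriodicPt_iff_minimalPeriod_dvd.mpr hpM)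
    set P₀ := Q.out with hP₀
    have hmkP₀ : mk P₀ = Q := Quotient.out_eq Q
    have : mk (f^[M] P₀) = mk P₀ := by
      rw [← hiter, hmkP₀, hQM]
    obtain ⟨h, hh⟩ := Quotient.exact this
    have hh' : h • P₀ = f^[M] P₀ := hh
    have hcycle : ∀ k : ℕ, f^[M * k] P₀ = h ^ k • P₀ := by
      intro k
      induction k with
      | zero => simp
      | succ k ih =>
          rw [Nat.mul_succ, Function.iterate_add_apply, ← hh', hfiter, ih,
            smul_smul, ← pow_succ']
    have hm1 : h ^ Nat.factorial m = 1 := by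
      obtain ⟨k, hk⟩ := Nat.dvd_factorial (hm ▸ Fintype.card_pos) (le_refl m)
      rw [hk, pow_mul, ← hm, pow_card_eq_one, one_pow]
    refine ⟨P₀, ?_, hmkP₀⟩
    rw [hN, hcycle, hm1, one_smul]
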